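/- arXiv:1103.2427 — 2 statements merged into one kernel-verified Lean document; each statement's English description precedes it below -/
import Mathlib

section
/- For every c ≥ 3 with c ≡ 3 (mod 4) and every odd k ≥ 3, γ(P(ck,k)) ≤ ⌊ck/2⌋ + ⌊k/4⌋ + 1. -/
open SimpleGraph

/-- The generalized Petersen graph P(n,k): outer vertices `Sum.inl i`,
inner vertices `Sum.inr i`, indices in `ZMod n`. -/
def petersen (n k : ℕ) : SimpleGraph (ZMod n ⊕ ZMod n) :=
  SimpleGraph.fromRel (fun a b =>
    match a, b with
    | Sum.inl i, Sum.inl j => j = i + 1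
    | Sum.inl i, Sum.inr j => j = i
    | Sum.inr i, Sum.inr j => j = i + (k : ZMod n)
    | _, _ => False)

/-- S is a dominating set: N[S] = V. -/
def IsDominating {V : Type*} (G : SimpleGraph V) (S : Set V) : Prop :=
  ∀ v, v ∈ S ∨ ∃ u ∈ S, G.Adj u v

/-- The domination number: minimum cardinality of a (finite) dominating set. -/
noncomputable def gamma {V : Type*} (G : SimpleGraph V) : ℕ :=
  sInf {m | ∃ S : Finset V, IsDominating G ↑S ∧ S.card = m}

section Helpers

lemma gamma_le {V : Type*} (G : SimpleGraph V) (S : Finset V) (h : IsDominating G ↑S) :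
    gamma G ≤ S.card :=
  Nat.sInf_le ⟨S, h, rfl⟩

lemma adj_out {n k : ℕ} (hn : 1 < n) (i : ZMod n) :
    (petersen n k).Adj (Sum.inl i) (Sum.inl (i+1)) := by
  haveI : Fact (1 < n) := ⟨hn⟩
  rw [petersen, SimpleGraph.fromRel_adj]
  refine ⟨fun h => ?_, Or.inl rfl⟩
  have h2 : i = i + 1 := Sum.inl.inj h
  exact one_ne_zero (left_eq_add.mp h2)

lemma adj_spoke {n k : ℕ} (i : ZMod n) :
    (petersen n k).Adj (Sum.inl i) (Sum.inr i) := by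
  rw [petersen, SimpleGraph.fromRel_adj]
  exact ⟨Sum.inl_ne_inr, Or.inl rfl⟩

lemma adj_in {n k : ℕ} (hk : (k : ZMod n) ≠ 0) (i : ZMod n) :
    (petersen n k).Adj (Sum.inr i) (Sum.inr (i + k)) := by
  rw [petersen, SimpleGraph.fromRel_adj]
  refine ⟨fun h => ?_, Or.inl rfl⟩
  exact hk (left_eq_add.mp (Sum.inr.inj h))

lemma count_aux (p : ℕ → Prop) [DecidablePred p] (f : ℕ → ℕ) (h0 : f 0 = 0)
    (hs : ∀ m, f (m+1) = f m + if p m then 1 else 0) (n : ℕ) :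
    ((Finset.range n).filter p).card = f n := by
  induction n with
  | zero => simp [h0]
  | succ m ih =>
    rw [Finset.range_add_one, Finset.filter_insert, hs]
    by_cases h : p m
    · rw [if_pos h, if_pos h, Finset.card_insert_of_notMem (by simp), ih]
    · rw [if_neg h, if_neg h, ih, Nat.add_zero]

lemma count_mod4 (n r : ℕ) (hr : r < 4) :
    ((Finset.range n).filter (fun i => i % 4 = r)).card = (n + 3 - r) / 4 := by
  apply count_aux
  · omega
  · intro m; split_ifs with h <;> omega

lemma count_mod4_ne0 (n : ℕ) :
    ((Finset.range n).filter (fun i => i % 4 = 0 ∧ i ≠ 0)).card = (n + 3) / 4 - 1 := by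
  apply count_aux
  · omega
  · intro m; split_ifs with h <;> omega

lemma filter_and_lt (n k r : ℕ) (hkn : k ≤ n) :
    ((Finset.range n).filter (fun i => i % 4 = r ∧ i < k)) =
      ((Finset.range k).filter (fun i => i % 4 = r)) := by
  ext a; simp only [Finset.mem_filter, Finset.mem_range]; omega

lemma card_zmod_filter (n : ℕ) [NeZero n] (p : ℕ → Prop) [DecidablePred p] :
    (Finset.univ.filter (fun x : ZMod n => p x.val)).card = ((Finset.range n).filter p).card := by
  apply Finset.card_bij (fun x _ => x.val)
  · intro a ha
    simp only [Finset.mem_filter, Finset.mem_univ, true_and] at ha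
    simp only [Finset.mem_filter, Finset.mem_range]
    exact ⟨ZMod.val_lt a, ha⟩
  · intro a _ b _ h
    exact ZMod.val_injective n h
  · intro b hb
    simp only [Finset.mem_filter, Finset.mem_range] at hb
    refine ⟨(b : ZMod n), ?_, ZMod.val_cast_of_lt hb.1⟩
    simp only [Finset.mem_filter, Finset.mem_univ, true_and, ZMod.val_cast_of_lt hb.1]
    exact hb.2

/-- dominating set construction: generic over the two parity cases.
`e0` : extra condition on outer vertices (`i ≠ 0` in the k%4=3 case),
`r` : residue of the extra inner vertices (3 for k%4=1, 1 for k%4=3). -/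
def petDomSet (n k r : ℕ) (e : Prop) [Decidable e] [NeZero n] :
    Finset (ZMod n ⊕ ZMod n) :=
  ((Finset.univ.filter (fun x : ZMod n => x.val % 4 = 0 ∧ (e → x.val ≠ 0))).map
      ⟨Sum.inl, Sum.inl_injective⟩) ∪
  ((Finset.univ.filter (fun x : ZMod n => x.val % 4 = 2 ∨ (x.val % 4 = r ∧ x.val < k))).map
      ⟨Sum.inr, Sum.inr_injective⟩)

lemma mem_petDomSet_inl {n k r : ℕ} {e : Prop} [Decidable e] [NeZero n] (x : ZMod n) :
    Sum.inl x ∈ petDomSet n k r e ↔ (x.val % 4 = 0 ∧ (e → x.val ≠ 0)) := by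
  simp [petDomSet]

lemma mem_petDomSet_inr {n k r : ℕ} {e : Prop} [Decidable e] [NeZero n] (x : ZMod n) :
    Sum.inr x ∈ petDomSet n k r e ↔ (x.val % 4 = 2 ∨ (x.val % 4 = r ∧ x.val < k)) := by
  simp [petDomSet]

lemma card_petDomSet (n k r : ℕ) (e : Prop) [Decidable e] [NeZero n] (hr2 : r ≠ 2) (hr4 : r < 4)
    (hkn : k ≤ n) :
    (petDomSet n k r e).card =
      ((Finset.range n).filter (fun i => i % 4 = 0 ∧ (e → i ≠ 0))).card
        + (n + 3 - 2) / 4 + (k + 3 - r) / 4 := by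
  have hin : ((Finset.range n).filter (fun i => i % 4 = 2 ∨ (i % 4 = r ∧ i < k))).card
      = (n + 3 - 2) / 4 + (k + 3 - r) / 4 := by
    rw [Finset.filter_or, Finset.card_union_of_disjoint, count_mod4 n 2 (by norm_num),
      filter_and_lt n k r hkn, count_mod4 k r hr4]
    rw [Finset.disjoint_left]
    intro a ha hb
    simp only [Finset.mem_filter] at ha hb
    omega
  rw [petDomSet, Finset.card_union_of_disjoint, Finset.card_map, Finset.card_map,
    card_zmod_filter n (fun i => i % 4 = 0 ∧ (e → i ≠ 0)),
    card_zmod_filter n (fun i => i % 4 = 2 ∨ (i % 4 = r ∧ i < k)), hin]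
  · omega
  · rw [Finset.disjoint_left]
    rintro a ha hb
    simp only [Finset.mem_map, Function.Embedding.coeFn_mk] at ha hb
    obtain ⟨_, _, rfl⟩ := ha
    obtain ⟨_, _, h⟩ := hb
    exact Sum.inl_ne_inr h.symm
end Helpers

theorem petersen_upper_c3mod4_kodd (c k : ℕ) (hc : 3 ≤ c) (hc4 : c % 4 = 3)
    (hk : 3 ≤ k) (hkodd : k % 2 = 1) :
    gamma (petersen (c * k) k) ≤ c * k / 2 + k / 4 + 1 := by
  have h3k : 3 * k ≤ c * k := Nat.mul_le_mul_right k hc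
  have hkn : k < c * k := by omega
  have h9 : 9 ≤ c * k := by omega
  haveI : NeZero (c * k) := ⟨by omega⟩
  set n := c * k with hn
  have h1n : 1 < n := by omega
  have hknz : (k : ZMod n) ≠ 0 := by
    intro h
    have hv : ((k : ZMod n)).val = k := ZMod.val_cast_of_lt hkn
    rw [h, ZMod.val_zero] at hv
    omega
  have hcv : ∀ x : ZMod n, ((x.val : ℕ) : ZMod n) = x := fun x => ZMod.natCast_rightInverse x
  have hk4 : k % 4 = 1 ∨ k % 4 = 3 := by omega
  rcases hk4 with hk1 | hk3
  · -- k ≡ 1 (mod 4), n ≡ 3 (mod 4)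
    have hn4 : n % 4 = 3 := by rw [hn, Nat.mul_mod, hc4, hk1]
    set D := petDomSet n k 3 False with hD
    have hdom : IsDominating (petersen n k) ↑D := by
      intro v
      cases v with
      | inl x =>
        have hi : x.val < n := ZMod.val_lt x
        have h4 : x.val % 4 = 0 ∨ x.val % 4 = 1 ∨ x.val % 4 = 2 ∨ x.val % 4 = 3 := by omega
        rcases h4 with h | h | h | h
        · left
          rw [Finset.mem_coe, hD, mem_petDomSet_inl]
          exact ⟨h, by simp⟩
        · right
          refine ⟨Sum.inl ((x.val - 1 : ℕ) : ZMod n), ?_, ?_⟩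
          · rw [Finset.mem_coe, hD, mem_petDomSet_inl, ZMod.val_cast_of_lt (by omega)]
            exact ⟨by omega, by simp⟩
          · have ha := adj_out (k := k) h1n (((x.val - 1 : ℕ) : ZMod n))
            have he : ((x.val - 1 : ℕ) : ZMod n) + 1 = x := by
              rw [show ((x.val - 1 : ℕ) : ZMod n) + 1 = ((x.val - 1 + 1 : ℕ) : ZMod n) by
                push_cast; ring, show x.val - 1 + 1 = x.val by omega, hcv]
            rwa [he] at ha
        · right
          exact ⟨Sum.inr x, by rw [Finset.mem_coe, hD, mem_petDomSet_inr]; exact Or.inl h,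
            (adj_spoke x).symm⟩
        · right
          refine ⟨Sum.inl (x + 1), ?_, (adj_out h1n x).symm⟩
          have hval : (x + 1).val = x.val + 1 := by
            rw [show x + 1 = ((x.val + 1 : ℕ) : ZMod n) by rw [Nat.cast_add, Nat.cast_one, hcv],
              ZMod.val_cast_of_lt (by omega)]
          rw [Finset.mem_coe, hD, mem_petDomSet_inl, hval]
          exact ⟨by omega, by simp⟩
      | inr x =>
        have hi : x.val < n := ZMod.val_lt x
        have h4 : x.val % 4 = 0 ∨ x.val % 4 = 1 ∨ x.val % 4 = 2 ∨ x.val % 4 = 3 := by omega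
        rcases h4 with h | h | h | h
        · right
          exact ⟨Sum.inl x, by rw [Finset.mem_coe, hD, mem_petDomSet_inl]; exact ⟨h, by simp⟩,
            adj_spoke x⟩
        · right
          refine ⟨Sum.inr (x + k), ?_, (adj_in hknz x).symm⟩
          have hxk : x + k = ((x.val + k : ℕ) : ZMod n) := by rw [Nat.cast_add, hcv]
          have hval : (x + k).val = (x.val + k) % n := by rw [hxk, ZMod.val_natCast]
          rw [Finset.mem_coe, hD, mem_petDomSet_inr, hval]
          by_cases hlt : x.val + k < n
          · rw [Nat.mod_eq_of_lt hlt]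
            left; omega
          · have hm : (x.val + k) % n = x.val + k - n := by
              rw [Nat.mod_eq_sub_mod (by omega), Nat.mod_eq_of_lt (by omega)]
            rw [hm]
            right; constructor <;> omega
        · left
          rw [Finset.mem_coe, hD, mem_petDomSet_inr]
          exact Or.inl h
        · by_cases hik : x.val < k
          · left
            rw [Finset.mem_coe, hD, mem_petDomSet_inr]
            exact Or.inr ⟨h, hik⟩
          · right
            refine ⟨Sum.inr ((x.val - k : ℕ) : ZMod n), ?_, ?_⟩
            · rw [Finset.mem_coe, hD, mem_petDomSet_inr, ZMod.val_cast_of_lt (by omega)]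
              left; omega
            · have ha := adj_in hknz (((x.val - k : ℕ) : ZMod n))
              have he : ((x.val - k : ℕ) : ZMod n) + k = x := by
                rw [show ((x.val - k : ℕ) : ZMod n) + k = ((x.val - k + k : ℕ) : ZMod n) by
                  push_cast; ring, show x.val - k + k = x.val by omega, hcv]
              rwa [he] at ha
    have hcard : D.card = ((Finset.range n).filter (fun i => i % 4 = 0 ∧ (False → i ≠ 0))).card
        + (n + 3 - 2) / 4 + (k + 3 - 3) / 4 :=
      card_petDomSet n k 3 False (by norm_num) (by norm_num) (le_of_lt hkn)
    have hc0 : ((Finset.range n).filter (fun i => i % 4 = 0 ∧ (False → i ≠ 0))).card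
        = (n + 3 - 0) / 4 := by
      rw [← count_mod4 n 0 (by norm_num)]
      congr 1
      ext a
      simp
    calc gamma (petersen n k) ≤ D.card := gamma_le _ D hdom
      _ ≤ n / 2 + k / 4 + 1 := by omega
  · -- k ≡ 3 (mod 4), n ≡ 1 (mod 4)
    have hn4 : n % 4 = 1 := by rw [hn, Nat.mul_mod, hc4, hk3]
    set D := petDomSet n k 1 True with hD
    have hdom : IsDominating (petersen n k) ↑D := by
      intro v
      cases v with
      | inl x =>
        have hi : x.val < n := ZMod.val_lt x
        have h4 : x.val % 4 = 0 ∨ x.val % 4 = 1 ∨ x.val % 4 = 2 ∨ x.val % 4 = 3 := by omega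
        rcases h4 with h | h | h | h
        · by_cases h0 : x.val = 0
          · right
            refine ⟨Sum.inl ((n - 1 : ℕ) : ZMod n), ?_, ?_⟩
            · rw [Finset.mem_coe, hD, mem_petDomSet_inl, ZMod.val_cast_of_lt (by omega)]
              exact ⟨by omega, fun _ => by omega⟩
            · have ha := adj_out (k := k) h1n (((n - 1 : ℕ) : ZMod n))
              have hx0 : x = 0 := by
                rw [← hcv x, h0, Nat.cast_zero]
              have he : ((n - 1 : ℕ) : ZMod n) + 1 = x := by
                rw [show ((n - 1 : ℕ) : ZMod n) + 1 = ((n - 1 + 1 : ℕ) : ZMod n) by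
                  push_cast; ring, show n - 1 + 1 = n by omega, ZMod.natCast_self, hx0]
              rwa [he] at ha
          · left
            rw [Finset.mem_coe, hD, mem_petDomSet_inl]
            exact ⟨h, fun _ => h0⟩
        · by_cases hik : x.val < k
          · right
            exact ⟨Sum.inr x, by
              rw [Finset.mem_coe, hD, mem_petDomSet_inr]; exact Or.inr ⟨h, hik⟩,
              (adj_spoke x).symm⟩
          · right
            refine ⟨Sum.inl ((x.val - 1 : ℕ) : ZMod n), ?_, ?_⟩
            · rw [Finset.mem_coe, hD, mem_petDomSet_inl, ZMod.val_cast_of_lt (by omega)]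
              exact ⟨by omega, fun _ => by omega⟩
            · have ha := adj_out (k := k) h1n (((x.val - 1 : ℕ) : ZMod n))
              have he : ((x.val - 1 : ℕ) : ZMod n) + 1 = x := by
                rw [show ((x.val - 1 : ℕ) : ZMod n) + 1 = ((x.val - 1 + 1 : ℕ) : ZMod n) by
                  push_cast; ring, show x.val - 1 + 1 = x.val by omega, hcv]
              rwa [he] at ha
        · right
          exact ⟨Sum.inr x, by rw [Finset.mem_coe, hD, mem_petDomSet_inr]; exact Or.inl h,
            (adj_spoke x).symm⟩
        · right
          refine ⟨Sum.inl (x + 1), ?_, (adj_out h1n x).symm⟩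
          have hval : (x + 1).val = x.val + 1 := by
            rw [show x + 1 = ((x.val + 1 : ℕ) : ZMod n) by rw [Nat.cast_add, Nat.cast_one, hcv],
              ZMod.val_cast_of_lt (by omega)]
          rw [Finset.mem_coe, hD, mem_petDomSet_inl, hval]
          exact ⟨by omega, fun _ => by omega⟩
      | inr x =>
        have hi : x.val < n := ZMod.val_lt x
        have h4 : x.val % 4 = 0 ∨ x.val % 4 = 1 ∨ x.val % 4 = 2 ∨ x.val % 4 = 3 := by omega
        rcases h4 with h | h | h | h
        · by_cases h0 : x.val = 0
          · right
            refine ⟨Sum.inr ((n - k : ℕ) : ZMod n), ?_, ?_⟩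
            · rw [Finset.mem_coe, hD, mem_petDomSet_inr, ZMod.val_cast_of_lt (by omega)]
              left; omega
            · have ha := adj_in hknz (((n - k : ℕ) : ZMod n))
              have hx0 : x = 0 := by
                rw [← hcv x, h0, Nat.cast_zero]
              have he : ((n - k : ℕ) : ZMod n) + k = x := by
                rw [show ((n - k : ℕ) : ZMod n) + k = ((n - k + k : ℕ) : ZMod n) by
                  push_cast; ring, show n - k + k = n by omega, ZMod.natCast_self, hx0]
              rwa [he] at ha
          · right
            exact ⟨Sum.inl x, by
              rw [Finset.mem_coe, hD, mem_petDomSet_inl]; exact ⟨h, fun _ => h0⟩,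
              adj_spoke x⟩
        · by_cases hik : x.val < k
          · left
            rw [Finset.mem_coe, hD, mem_petDomSet_inr]
            exact Or.inr ⟨h, hik⟩
          · right
            refine ⟨Sum.inr ((x.val - k : ℕ) : ZMod n), ?_, ?_⟩
            · rw [Finset.mem_coe, hD, mem_petDomSet_inr, ZMod.val_cast_of_lt (by omega)]
              left; omega
            · have ha := adj_in hknz (((x.val - k : ℕ) : ZMod n))
              have he : ((x.val - k : ℕ) : ZMod n) + k = x := by
                rw [show ((x.val - k : ℕ) : ZMod n) + k = ((x.val - k + k : ℕ) : ZMod n) by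
                  push_cast; ring, show x.val - k + k = x.val by omega, hcv]
              rwa [he] at ha
        · left
          rw [Finset.mem_coe, hD, mem_petDomSet_inr]
          exact Or.inl h
        · right
          refine ⟨Sum.inr (x + k), ?_, (adj_in hknz x).symm⟩
          have hxk : x + k = ((x.val + k : ℕ) : ZMod n) := by rw [Nat.cast_add, hcv]
          have hval : (x + k).val = (x.val + k) % n := by rw [hxk, ZMod.val_natCast]
          rw [Finset.mem_coe, hD, mem_petDomSet_inr, hval]
          by_cases hlt : x.val + k < n
          · rw [Nat.mod_eq_of_lt hlt]
            left; omega
          · have hm : (x.val + k) % n = x.val + k - n := by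
              rw [Nat.mod_eq_sub_mod (by omega), Nat.mod_eq_of_lt (by omega)]
            rw [hm]
            right; constructor <;> omega
    have hcard : D.card = ((Finset.range n).filter (fun i => i % 4 = 0 ∧ (True → i ≠ 0))).card
        + (n + 3 - 2) / 4 + (k + 3 - 1) / 4 :=
      card_petDomSet n k 1 True (by norm_num) (by norm_num) (le_of_lt hkn)
    have hc0 : ((Finset.range n).filter (fun i => i % 4 = 0 ∧ (True → i ≠ 0))).card
        = (n + 3) / 4 - 1 := by
      rw [← count_mod4_ne0 n]
      congr 1
      ext a
      simp
    calc gamma (petersen n k) ≤ D.card := gamma_le _ D hdom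
      _ ≤ n / 2 + k / 4 + 1 := by omega
end

section
/- For every odd k ≥ 1 with k < 2k (i.e., k ≥ 1), the domination number of the generalized Petersen graph P(4k,k) equals 2k. -/
open SimpleGraph

lemma pet_adj {n k : ℕ} (a b : ZMod n ⊕ ZMod n) :
    (petersen n k).Adj a b ↔ a ≠ b ∧
      ((match a, b with
        | Sum.inl i, Sum.inl j => j = i + 1
        | Sum.inl i, Sum.inr j => j = i
        | Sum.inr i, Sum.inr j => j = i + (k : ZMod n)
        | _, _ => False) ∨
       (match b, a with
        | Sum.inl i, Sum.inl j => j = i + 1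
        | Sum.inl i, Sum.inr j => j = i
        | Sum.inr i, Sum.inr j => j = i + (k : ZMod n)
        | _, _ => False)) := by
  rw [petersen, SimpleGraph.fromRel_adj]

lemma count_mod4_s9 (k : ℕ) [NeZero (4*k)] (hk : 1 ≤ k) (r : ℕ) (hr : r < 4) :
    (Finset.univ.filter fun i : ZMod (4*k) => i.val % 4 = r).card = k := by
  have h : (Finset.univ.filter fun i : ZMod (4*k) => i.val % 4 = r).card
      = (Finset.univ : Finset (Fin k)).card := by
    apply Finset.card_bij (fun i _ => (⟨i.val / 4, by
      have := ZMod.val_lt i; omega⟩ : Fin k))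
    · intro a ha; exact Finset.mem_univ _
    · intro a ha b hb h
      simp only [Finset.mem_filter] at ha hb
      have h4 : a.val / 4 = b.val / 4 := congrArg Fin.val h
      have : a.val = b.val := by omega
      exact ZMod.val_injective _ this
    · intro b _
      refine ⟨((4 * b.val + r : ℕ) : ZMod (4*k)), ?_, ?_⟩
      · have hlt : 4 * b.val + r < 4 * k := by have := b.isLt; omega
        simp only [Finset.mem_filter, Finset.mem_univ, true_and]
        rw [ZMod.val_natCast, Nat.mod_eq_of_lt hlt]
        omega
      · have hlt : 4 * b.val + r < 4 * k := by have := b.isLt; omega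
        ext
        simp only []
        rw [ZMod.val_natCast, Nat.mod_eq_of_lt hlt]
        omega
  rw [h, Finset.card_univ, Fintype.card_fin]

def domset (k : ℕ) [NeZero (4*k)] : Finset (ZMod (4*k) ⊕ ZMod (4*k)) :=
  (Finset.univ.filter fun i : ZMod (4*k) => i.val % 4 = 0).image Sum.inl ∪
  (Finset.univ.filter fun i : ZMod (4*k) => i.val % 4 = 2).image Sum.inr

lemma mem_domset_inl {k : ℕ} [NeZero (4*k)] (i : ZMod (4*k)) :
    Sum.inl i ∈ domset k ↔ i.val % 4 = 0 := by
  simp [domset]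

lemma mem_domset_inr {k : ℕ} [NeZero (4*k)] (i : ZMod (4*k)) :
    Sum.inr i ∈ domset k ↔ i.val % 4 = 2 := by
  simp [domset]

lemma card_domset (k : ℕ) [NeZero (4*k)] (hk : 1 ≤ k) : (domset k).card = 2 * k := by
  rw [domset, Finset.card_union_of_disjoint, Finset.card_image_of_injective _ Sum.inl_injective,
    Finset.card_image_of_injective _ Sum.inr_injective, count_mod4_s9 k hk 0 (by omega),
    count_mod4_s9 k hk 2 (by omega)]
  · omega
  · simp [Finset.disjoint_left]

lemma val_add_mod4 (k : ℕ) [NeZero (4*k)] (i : ZMod (4*k)) (c : ℕ) :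
    (i + (c : ZMod (4*k))).val % 4 = (i.val + c) % 4 := by
  have h4 : (4 : ℕ) ∣ 4 * k := Dvd.intro k rfl
  rw [ZMod.val_add, Nat.mod_mod_of_dvd _ h4, ZMod.val_natCast,
    Nat.add_mod, Nat.mod_mod_of_dvd c h4, ← Nat.add_mod]

lemma ne_add (k : ℕ) [NeZero (4*k)] (i : ZMod (4*k)) (c : ℕ) (h0 : c % 4 ≠ 0) :
    i + (c : ZMod (4*k)) ≠ i := by
  intro h
  rw [add_eq_left] at h
  have h4 : (4 : ℕ) ∣ 4 * k := Dvd.intro k rfl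
  have : (c : ZMod (4*k)).val = 0 := by rw [h, ZMod.val_zero]
  rw [ZMod.val_natCast] at this
  have := Nat.mod_mod_of_dvd c h4
  omega

lemma domset_dominating (k : ℕ) [NeZero (4*k)] (hk : 1 ≤ k) (hkodd : k % 2 = 1) :
    IsDominating (petersen (4*k) k) ↑(domset k) := by
  intro v
  have h4 : (4 : ℕ) ∣ 4 * k := Dvd.intro k rfl
  match v with
  | Sum.inl i =>
    have hr : i.val % 4 = 0 ∨ i.val % 4 = 1 ∨ i.val % 4 = 2 ∨ i.val % 4 = 3 := by omega
    rcases hr with hr | hr | hr | hr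
    · exact Or.inl (by simpa [Finset.mem_coe] using (mem_domset_inl i).2 hr)
    · -- dominated by inl (i - 1) = inl (i + (4k-1))
      refine Or.inr ⟨Sum.inl (i + ((4*k-1 : ℕ) : ZMod (4*k))), ?_, ?_⟩
      · rw [Finset.mem_coe, mem_domset_inl, val_add_mod4]
        omega
      · rw [pet_adj]
        constructor
        · intro h
          exact ne_add k i (4*k-1) (by omega) (Sum.inl.inj h)
        · left
          simp only []
          have : ((4*k-1 : ℕ) : ZMod (4*k)) = -1 := by
            have : ((4*k - 1 : ℕ) : ZMod (4*k)) = ((4*k : ℕ) : ZMod (4*k)) - 1 := by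
              push_cast [Nat.cast_sub (by omega : 1 ≤ 4*k)]; ring
            rw [this, ZMod.natCast_self]; ring
          rw [this]; ring
    · refine Or.inr ⟨Sum.inr i, ?_, ?_⟩
      · exact Finset.mem_coe.mpr <| id <| (mem_domset_inr i).2 hr
      · rw [pet_adj]
        exact ⟨by simp, Or.inr rfl⟩
    · refine Or.inr ⟨Sum.inl (i + ((1 : ℕ) : ZMod (4*k))), ?_, ?_⟩
      · rw [Finset.mem_coe, mem_domset_inl, val_add_mod4]
        omega
      · rw [pet_adj]
        constructor
        · intro h
          exact ne_add k i 1 (by omega) (Sum.inl.inj h)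
        · right; simp
  | Sum.inr i =>
    have hr : i.val % 4 = 0 ∨ i.val % 4 = 1 ∨ i.val % 4 = 2 ∨ i.val % 4 = 3 := by omega
    rcases hr with hr | hr | hr | hr
    · refine Or.inr ⟨Sum.inl i, ?_, ?_⟩
      · exact Finset.mem_coe.mpr <| id <| (mem_domset_inl i).2 hr
      · rw [pet_adj]
        exact ⟨by simp, Or.inl rfl⟩
    · -- i.val % 4 = 1
      by_cases hc : (i.val + k) % 4 = 2
      · refine Or.inr ⟨Sum.inr (i + ((k : ℕ) : ZMod (4*k))), ?_, ?_⟩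
        · rw [Finset.mem_coe, mem_domset_inr, val_add_mod4]
          omega
        · rw [pet_adj]
          refine ⟨fun h => ne_add k i k (by omega) (Sum.inr.inj h), Or.inr rfl⟩
      · refine Or.inr ⟨Sum.inr (i + ((3*k : ℕ) : ZMod (4*k))), ?_, ?_⟩
        · rw [Finset.mem_coe, mem_domset_inr, val_add_mod4]
          omega
        · rw [pet_adj]
          refine ⟨fun h => ne_add k i (3*k) (by omega) (Sum.inr.inj h), Or.inl ?_⟩
          simp only []
          rw [add_assoc]
          have : ((3*k : ℕ) : ZMod (4*k)) + (k : ZMod (4*k)) = 0 := by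
            have : ((3*k : ℕ) : ZMod (4*k)) + ((k : ℕ) : ZMod (4*k)) = ((4*k : ℕ) : ZMod (4*k)) := by
              push_cast; ring
            rw [this, ZMod.natCast_self]
          rw [this, add_zero]
    · exact Or.inl (by simpa [Finset.mem_coe] using (mem_domset_inr i).2 hr)
    · -- i.val % 4 = 3
      by_cases hc : (i.val + k) % 4 = 2
      · refine Or.inr ⟨Sum.inr (i + ((k : ℕ) : ZMod (4*k))), ?_, ?_⟩
        · rw [Finset.mem_coe, mem_domset_inr, val_add_mod4]
          omega
        · rw [pet_adj]
          refine ⟨fun h => ne_add k i k (by omega) (Sum.inr.inj h), Or.inr rfl⟩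
      · refine Or.inr ⟨Sum.inr (i + ((3*k : ℕ) : ZMod (4*k))), ?_, ?_⟩
        · rw [Finset.mem_coe, mem_domset_inr, val_add_mod4]
          omega
        · rw [pet_adj]
          refine ⟨fun h => ne_add k i (3*k) (by omega) (Sum.inr.inj h), Or.inl ?_⟩
          simp only []
          rw [add_assoc]
          have : ((3*k : ℕ) : ZMod (4*k)) + (k : ZMod (4*k)) = 0 := by
            have : ((3*k : ℕ) : ZMod (4*k)) + ((k : ℕ) : ZMod (4*k)) = ((4*k : ℕ) : ZMod (4*k)) := by
              push_cast; ring
            rw [this, ZMod.natCast_self]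
          rw [this, add_zero]

def nbhd (k : ℕ) [NeZero (4*k)] : (ZMod (4*k) ⊕ ZMod (4*k)) → Finset (ZMod (4*k) ⊕ ZMod (4*k))
  | Sum.inl i => {Sum.inl (i-1), Sum.inl i, Sum.inl (i+1), Sum.inr i}
  | Sum.inr i => {Sum.inl i, Sum.inr i, Sum.inr (i + (k : ZMod (4*k))), Sum.inr (i - (k : ZMod (4*k)))}

lemma mem_nbhd (k : ℕ) [NeZero (4*k)] (s v : ZMod (4*k) ⊕ ZMod (4*k))
    (h : v = s ∨ (petersen (4*k) k).Adj s v) : v ∈ nbhd k s := by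
  rcases h with rfl | h
  · cases v <;> simp [nbhd]
  · rw [pet_adj] at h
    obtain ⟨hne, h⟩ := h
    match s, v with
    | Sum.inl i, Sum.inl j =>
      simp only [nbhd, Finset.mem_insert, Finset.mem_singleton]
      rcases h with h | h
      · right; right; left; rw [h]
      · left; rw [Sum.inl.injEq]; simp only [] at h; rw [h]; ring
    | Sum.inl i, Sum.inr j =>
      simp only [nbhd, Finset.mem_insert, Finset.mem_singleton]
      rcases h with h | h
      · right; right; right; rw [h]
      · exact absurd h (by simp)
    | Sum.inr i, Sum.inl j =>
      simp only [nbhd, Finset.mem_insert, Finset.mem_singleton]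
      rcases h with h | h
      · exact absurd h (by simp)
      · left; simp only [] at h; rw [h]
    | Sum.inr i, Sum.inr j =>
      simp only [nbhd, Finset.mem_insert, Finset.mem_singleton]
      rcases h with h | h
      · right; right; left; rw [h]
      · right; right; right; rw [Sum.inr.injEq]; simp only [] at h; rw [h]; ring

lemma card4 {α : Type*} [DecidableEq α] (a b c d : α) : ({a,b,c,d} : Finset α).card ≤ 4 := by
  have h1 := Finset.card_insert_le a ({b,c,d} : Finset α)
  have h2 := Finset.card_insert_le b ({c,d} : Finset α)
  have h3 := Finset.card_insert_le c ({d} : Finset α)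
  have h4 := Finset.card_singleton d
  omega

lemma card_nbhd_le (k : ℕ) [NeZero (4*k)] (s : ZMod (4*k) ⊕ ZMod (4*k)) : (nbhd k s).card ≤ 4 := by
  cases s <;> exact card4 _ _ _ _

lemma lower_bound (k : ℕ) [NeZero (4*k)] (hk : 1 ≤ k) (S : Finset (ZMod (4*k) ⊕ ZMod (4*k)))
    (hS : IsDominating (petersen (4*k) k) ↑S) : 2 * k ≤ S.card := by
  have hsub : (Finset.univ : Finset (ZMod (4*k) ⊕ ZMod (4*k))) ⊆ S.biUnion (nbhd k) := by
    intro v _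
    rcases hS v with h | ⟨u, hu, hadj⟩
    · exact Finset.mem_biUnion.2 ⟨v, h, mem_nbhd k v v (Or.inl rfl)⟩
    · exact Finset.mem_biUnion.2 ⟨u, hu, mem_nbhd k u v (Or.inr hadj)⟩
  have h1 : Fintype.card (ZMod (4*k) ⊕ ZMod (4*k)) ≤ S.card * 4 := by
    calc Fintype.card (ZMod (4*k) ⊕ ZMod (4*k)) = Finset.univ.card := Finset.card_univ.symm
      _ ≤ (S.biUnion (nbhd k)).card := Finset.card_le_card hsub
      _ ≤ ∑ s ∈ S, (nbhd k s).card := Finset.card_biUnion_le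
      _ ≤ ∑ _s ∈ S, 4 := Finset.sum_le_sum (fun s _ => card_nbhd_le k s)
      _ = S.card * 4 := by rw [Finset.sum_const, smul_eq_mul]
  have h2 : Fintype.card (ZMod (4*k) ⊕ ZMod (4*k)) = 8 * k := by
    rw [Fintype.card_sum, ZMod.card]
    omega
  omega

theorem gamma_P4k_odd (k : ℕ) (hk : 1 ≤ k) (hkodd : k % 2 = 1) :
    gamma (petersen (4 * k) k) = 2 * k := by
  haveI : NeZero (4*k) := ⟨by omega⟩
  have hmem : 2 * k ∈ {m | ∃ S : Finset (ZMod (4*k) ⊕ ZMod (4*k)),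
      IsDominating (petersen (4*k) k) ↑S ∧ S.card = m} :=
    ⟨domset k, domset_dominating k hk hkodd, card_domset k hk⟩
  refine le_antisymm (Nat.sInf_le hmem) (le_csInf ⟨_, hmem⟩ ?_)
  rintro m ⟨S, hS, rfl⟩
  exact lower_bound k hk S hS
end
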